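/- Assume k(c) > 0 for all c ∈ [0,1]. Then for every c ∈ [0,1] and every x > β*(c) one has the closed-form expression F(x, c) = μΦ(c) + (x − μ) λΦ(c)/(λ + θ) + φ(x) ∫_c^1 ( G(β*(y); y)/φ(β*(y)) ) dy, and consequently (1/2)σ² F_{xx}(x, c) + θ(μ − x) F_x(x, c) − λ F(x, c) = −λ Φ(c) x for all x > β*(c). -/

import Mathlib

open MeasureTheory Real Set Filter

/-- The (positive multiple of the) strictly decreasing fundamental solution `φ_λ` of the
Ornstein–Uhlenbeck equation `(1/2)σ² f'' + θ(μ - x) f' = λ f`, written as the integral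
`φ(x) = ∫₀^∞ t^(λ/θ - 1) exp(-t²/2 - a t (x - μ)) dt` with `a = √(2θ)/σ`. -/
noncomputable def OUphi (lam th mu sig : ℝ) (x : ℝ) : ℝ :=
  ∫ t in Set.Ioi (0:ℝ),
    t ^ (lam / th - 1) * Real.exp (-t ^ 2 / 2 - Real.sqrt (2 * th) / sig * t * (x - mu))

/-- `k(c) = λ + θ + λ Φ'(c)`. -/
noncomputable def kfun (lam th : ℝ) (Phi : ℝ → ℝ) (c : ℝ) : ℝ :=
  lam + th + lam * deriv Phi c

/-- `G(x; c) = μ(k(c) - θ)/λ + k(c)(x - μ)/(λ + θ)`. -/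
noncomputable def Gfun (lam th mu : ℝ) (Phi : ℝ → ℝ) (x c : ℝ) : ℝ :=
  mu * (kfun lam th Phi c - th) / lam + kfun lam th Phi c * (x - mu) / (lam + th)

/-- `x₀(c) = -θμΦ'(c)/k(c)`. -/
noncomputable def x0fun (lam th mu : ℝ) (Phi : ℝ → ℝ) (c : ℝ) : ℝ :=
  -(th * mu * deriv Phi c) / kfun lam th Phi c

/-- The smooth-fit function `H(x;c) = (k(c)/(λ+θ)) φ(x) - G(x;c) φ'(x)`. -/
noncomputable def Hfun (lam th mu sig : ℝ) (Phi : ℝ → ℝ) (x c : ℝ) : ℝ :=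
  kfun lam th Phi c / (lam + th) * OUphi lam th mu sig x
    - Gfun lam th mu Phi x c * deriv (OUphi lam th mu sig) x

/-- The candidate value function of the optimal stopping problem:
`u(x;c) = G(x;c) - (G(β;c)/φ(β)) φ(x)` for `x > β` and `u(x;c) = 0` for `x ≤ β`. -/
noncomputable def ufun (lam th mu sig : ℝ) (Phi : ℝ → ℝ) (b : ℝ) (x c : ℝ) : ℝ :=
  if b < x then
    Gfun lam th mu Phi x c
      - Gfun lam th mu Phi b c / OUphi lam th mu sig b * OUphi lam th mu sig x
  else 0

/-- The candidate value function of the control problem: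
`F(x,c) = x(1-c) - ∫_c^1 u(x;y) dy`, where `u(·;y)` uses the boundary `β(y)`. -/
noncomputable def Ffun (lam th mu sig : ℝ) (Phi : ℝ → ℝ) (beta : ℝ → ℝ) (x c : ℝ) : ℝ :=
  x * (1 - c) - ∫ y in c..(1:ℝ), ufun lam th mu sig Phi (beta y) x y

/-- assume `k > 0` on `[0,1]` and let `β(c)` be the unique zero of
`H(·;c)` (with `β(c) < x₀(c)`), strictly decreasing in `c`. Then for every `c ∈ [0,1]` and
every `x > β(c)` the closed form
`F(x,c) = μΦ(c) + (x-μ)λΦ(c)/(λ+θ) + φ(x) ∫_c^1 G(β(y);y)/φ(β(y)) dy`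
holds, and consequently `(1/2)σ² F_xx + θ(μ-x) F_x - λF = -λΦ(c)x` for all `x > β(c)`. -/

lemma exp_quad_le (t b : ℝ) :
    Real.exp (-t ^ 2 / 2 - b * t) ≤ Real.exp (b ^ 2) * Real.exp (-(1/4 : ℝ) * t ^ 2) := by
  rw [← Real.exp_add]
  apply Real.exp_le_exp.2
  nlinarith [sq_nonneg (t / 2 + b)]

lemma integrableOn_rpow_exp {p : ℝ} (b : ℝ) (hp : -1 < p) :
    IntegrableOn (fun t : ℝ => t ^ p * Real.exp (-t ^ 2 / 2 - b * t)) (Set.Ioi 0) := by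
  have hbase : IntegrableOn (fun t : ℝ => t ^ p * Real.exp (-(1/4 : ℝ) * t ^ 2)) (Set.Ioi 0) :=
    integrableOn_rpow_mul_exp_neg_mul_sq (by norm_num) hp
  apply Integrable.mono' (hbase.const_mul (Real.exp (b ^ 2)))
  · apply ContinuousOn.aestronglyMeasurable ?_ measurableSet_Ioi
    intro t ht
    exact ((Real.continuousAt_rpow_const t p (Or.inl (ne_of_gt ht))).continuousWithinAt).mul
      (Continuous.continuousWithinAt (by continuity))
  · filter_upwards [ae_restrict_mem measurableSet_Ioi] with t ht
    have h0 : (0:ℝ) ≤ t ^ p * Real.exp (-t ^ 2 / 2 - b * t) :=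
      mul_nonneg (Real.rpow_nonneg (le_of_lt ht) p) (Real.exp_pos _).le
    rw [Real.norm_eq_abs, abs_of_nonneg h0]
    have h1 : t ^ p * Real.exp (-t ^ 2 / 2 - b * t)
        ≤ t ^ p * (Real.exp (b ^ 2) * Real.exp (-(1/4 : ℝ) * t ^ 2)) :=
      mul_le_mul_of_nonneg_left (exp_quad_le t b) (Real.rpow_nonneg (le_of_lt ht) p)
    calc t ^ p * Real.exp (-t ^ 2 / 2 - b * t)
        ≤ t ^ p * (Real.exp (b ^ 2) * Real.exp (-(1/4 : ℝ) * t ^ 2)) := h1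
      _ = Real.exp (b ^ 2) * (t ^ p * Real.exp (-(1/4 : ℝ) * t ^ 2)) := by ring

noncomputable def Ifun (th sig mu : ℝ) (p x : ℝ) : ℝ :=
  ∫ t in Set.Ioi (0:ℝ),
    t ^ p * Real.exp (-t ^ 2 / 2 - (Real.sqrt (2 * th) / sig * (x - mu)) * t)

lemma OUphi_eq_Ifun (lam th mu sig : ℝ) :
    OUphi lam th mu sig = Ifun th sig mu (lam / th - 1) := by
  funext x
  unfold OUphi Ifun
  congr 1
  funext t
  congr 2
  ring

lemma hasDerivAt_Ifun {th sig : ℝ} (mu : ℝ) (hth : 0 < th) (hsig : 0 < sig)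
    {p : ℝ} (hp : -1 < p) (x : ℝ) :
    HasDerivAt (Ifun th sig mu p)
      (-(Real.sqrt (2 * th) / sig) * Ifun th sig mu (p + 1) x) x := by
  set a : ℝ := Real.sqrt (2 * th) / sig with ha_def
  have ha : 0 < a := div_pos (Real.sqrt_pos.2 (by linarith)) hsig
  set μv : Measure ℝ := volume.restrict (Set.Ioi 0) with hμ
  have hmem : ∀ᵐ t ∂μv, t ∈ Set.Ioi (0:ℝ) := ae_restrict_mem measurableSet_Ioi
  -- measurability helper
  have hmeas : ∀ (q y : ℝ), AEStronglyMeasurable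
      (fun t : ℝ => t ^ q * Real.exp (-t ^ 2 / 2 - (a * (y - mu)) * t)) μv := by
    intro q y
    apply ContinuousOn.aestronglyMeasurable ?_ measurableSet_Ioi
    intro t ht
    exact ((Real.continuousAt_rpow_const t q (Or.inl (ne_of_gt ht))).continuousWithinAt).mul
      (Continuous.continuousWithinAt (by continuity))
  have key := hasDerivAt_integral_of_dominated_loc_of_deriv_le
    (F := fun y t => t ^ p * Real.exp (-t ^ 2 / 2 - (a * (y - mu)) * t))
    (F' := fun y t => -a * (t ^ (p + 1) * Real.exp (-t ^ 2 / 2 - (a * (y - mu)) * t)))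
    (x₀ := x) (μ := μv)
    (bound := fun t => a * (t ^ (p + 1) * Real.exp (-t ^ 2 / 2 - (a * (x - 1 - mu)) * t)))
    (Metric.ball_mem_nhds x one_pos)
    (Filter.Eventually.of_forall fun y => hmeas p y)
    (integrableOn_rpow_exp (a * (x - mu)) hp)
    ((hmeas (p + 1) x).const_mul (-a))
    ?_ ((integrableOn_rpow_exp (a * (x - 1 - mu)) (by linarith)).const_mul a) ?_
  · have h2 : (∫ t in Set.Ioi (0:ℝ),
        -a * (t ^ (p + 1) * Real.exp (-t ^ 2 / 2 - (a * (x - mu)) * t)))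
        = -a * Ifun th sig mu (p + 1) x := by
      rw [MeasureTheory.integral_const_mul]
      rfl
    rw [← h2]
    exact key.2
  · -- bound
    filter_upwards [hmem] with t ht
    intro y hy
    have hty : x - 1 < y := by
      have := abs_lt.1 (mem_ball_iff_norm.1 hy)
      linarith [this.1]
    have hexp : Real.exp (-t ^ 2 / 2 - (a * (y - mu)) * t)
        ≤ Real.exp (-t ^ 2 / 2 - (a * (x - 1 - mu)) * t) := by
      apply Real.exp_le_exp.2
      have : a * (x - 1 - mu) * t ≤ a * (y - mu) * t := by
        apply mul_le_mul_of_nonneg_right _ (le_of_lt ht)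
        apply mul_le_mul_of_nonneg_left _ (le_of_lt ha)
        linarith
      linarith
    have h0 : (0:ℝ) ≤ t ^ (p+1) := Real.rpow_nonneg (le_of_lt ht) _
    rw [norm_mul, Real.norm_eq_abs, Real.norm_eq_abs, abs_of_nonneg
      (mul_nonneg h0 (Real.exp_pos _).le), abs_neg, abs_of_pos ha]
    exact mul_le_mul_of_nonneg_left
      (mul_le_mul_of_nonneg_left hexp h0) (le_of_lt ha)
  · -- differentiability
    filter_upwards [hmem] with t ht
    intro y hy
    have h1 : HasDerivAt (fun y : ℝ => -t ^ 2 / 2 - (a * (y - mu)) * t) (-(a * t)) y := by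
      have h2 : HasDerivAt (fun y : ℝ => (a * (y - mu)) * t) (a * t) y := by
        simpa using ((((hasDerivAt_id y).sub_const mu).const_mul a).mul_const t)
      simpa using (h2.const_sub (-t ^ 2 / 2))
    have h3 := ((h1.exp).const_mul (t ^ p))
    refine h3.congr_deriv ?_
    rw [Real.rpow_add_one (ne_of_gt ht)]
    ring


lemma parts_lemma {ν : ℝ} (b : ℝ) (hν : 0 < ν) :
    ν * (∫ t in Set.Ioi (0:ℝ), t ^ (ν - 1) * Real.exp (-t ^ 2 / 2 - b * t))
      - (∫ t in Set.Ioi (0:ℝ), t ^ (ν + 1) * Real.exp (-t ^ 2 / 2 - b * t))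
      - b * (∫ t in Set.Ioi (0:ℝ), t ^ ν * Real.exp (-t ^ 2 / 2 - b * t)) = 0 := by
  set E : ℝ → ℝ := fun t => Real.exp (-t ^ 2 / 2 - b * t) with hE
  set f : ℝ → ℝ := fun t => t ^ ν * E t with hf
  set f' : ℝ → ℝ := fun t => ν * (t ^ (ν - 1) * E t) - t ^ (ν + 1) * E t - b * (t ^ ν * E t)
    with hf'
  have i1 := integrableOn_rpow_exp (p := ν - 1) b (by linarith)
  have i2 := integrableOn_rpow_exp (p := ν + 1) b (by linarith)
  have i3 := integrableOn_rpow_exp (p := ν) b (by linarith)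
  have hfint : IntegrableOn f' (Set.Ioi 0) := ((i1.const_mul ν).sub i2).sub (i3.const_mul b)
  have hderiv : ∀ t ∈ Set.Ioi (0:ℝ), HasDerivAt f (f' t) t := by
    intro t ht
    have h1 : HasDerivAt (fun t : ℝ => -t ^ 2 / 2 - b * t) (-t - b) t := by
      have := (((hasDerivAt_pow 2 t).neg.div_const 2)).sub ((hasDerivAt_id t).const_mul b)
      exact this.congr_deriv (by norm_num; ring)
    have h2 : HasDerivAt E (E t * (-t - b)) t := h1.exp
    have h3 : HasDerivAt (fun t : ℝ => t ^ ν) (ν * t ^ (ν - 1)) t :=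
      Real.hasDerivAt_rpow_const (Or.inl (ne_of_gt ht))
    have h4 := h3.mul h2
    refine h4.congr_deriv ?_
    have ht1 : t ^ (ν + 1) = t ^ ν * t := Real.rpow_add_one (ne_of_gt ht) ν
    simp only [hf', ht1, pow_one]
    ring
  have hcont : ContinuousWithinAt f (Set.Ici 0) 0 := by
    apply ContinuousWithinAt.mul
    · exact (Real.continuousAt_rpow_const 0 ν (Or.inr hν.le)).continuousWithinAt
    · exact Continuous.continuousWithinAt (by continuity)
  have htend : Tendsto f atTop (nhds 0) := by
    apply squeeze_zero' (f := f) (g := fun t => t ^ ν * Real.exp (-1 * t)) (t₀ := atTop)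
    · filter_upwards [Filter.eventually_ge_atTop (0:ℝ)] with t ht
      exact mul_nonneg (Real.rpow_nonneg ht ν) (Real.exp_pos _).le
    · filter_upwards [Filter.eventually_ge_atTop (2 * (|b| + 1))] with t ht
      have ht0 : (0:ℝ) ≤ t := by nlinarith [abs_nonneg b]
      apply mul_le_mul_of_nonneg_left _ (Real.rpow_nonneg ht0 ν)
      apply Real.exp_le_exp.2
      nlinarith [abs_nonneg b, le_abs_self b, neg_abs_le b]
    · exact tendsto_rpow_mul_exp_neg_mul_atTop_nhds_zero ν 1 one_pos
  have h0 : f 0 = 0 := by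
    simp [hf, hE, Real.zero_rpow (ne_of_gt hν)]
  have hint := integral_Ioi_of_hasDerivAt_of_tendsto hcont hderiv hfint htend
  rw [h0, sub_zero] at hint
  have j1 : Integrable (fun t : ℝ => ν * (t ^ (ν - 1) * E t) - t ^ (ν + 1) * E t)
      (volume.restrict (Set.Ioi 0)) := (i1.const_mul ν).sub i2
  have j3 : Integrable (fun t : ℝ => b * (t ^ ν * E t))
      (volume.restrict (Set.Ioi 0)) := i3.const_mul b
  have j1a : Integrable (fun t : ℝ => ν * (t ^ (ν - 1) * E t))
      (volume.restrict (Set.Ioi 0)) := i1.const_mul ν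
  have hsplit : ∫ t in Set.Ioi (0:ℝ), f' t
      = ν * (∫ t in Set.Ioi (0:ℝ), t ^ (ν - 1) * E t)
        - (∫ t in Set.Ioi (0:ℝ), t ^ (ν + 1) * E t)
        - b * (∫ t in Set.Ioi (0:ℝ), t ^ ν * E t) := by
    rw [show ∫ t in Set.Ioi (0:ℝ), f' t = ∫ t in Set.Ioi (0:ℝ),
        ((ν * (t ^ (ν - 1) * E t) - t ^ (ν + 1) * E t) - b * (t ^ ν * E t)) from rfl,
      MeasureTheory.integral_sub j1 j3,
      MeasureTheory.integral_sub j1a i2,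
      MeasureTheory.integral_const_mul, MeasureTheory.integral_const_mul]
  rw [hint] at hsplit
  linarith [hsplit]

lemma Ifun_pos (th sig mu : ℝ) {p : ℝ} (hp : -1 < p) (x : ℝ) :
    0 < Ifun th sig mu p x := by
  set b : ℝ := Real.sqrt (2 * th) / sig * (x - mu)
  rw [Ifun, setIntegral_pos_iff_support_of_nonneg_ae]
  · have hsub : Set.Ioi (0:ℝ) ⊆ Function.support
        (fun t : ℝ => t ^ p * Real.exp (-t ^ 2 / 2 - b * t)) ∩ Set.Ioi 0 := by
      intro t ht
      refine ⟨?_, ht⟩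
      have : (0:ℝ) < t ^ p * Real.exp (-t ^ 2 / 2 - b * t) :=
        mul_pos (Real.rpow_pos_of_pos ht p) (Real.exp_pos _)
      exact Function.mem_support.2 (ne_of_gt this)
    calc (0:ENNReal) < volume (Set.Ioi (0:ℝ)) := by simp
      _ ≤ _ := measure_mono hsub
  · filter_upwards [ae_restrict_mem measurableSet_Ioi] with t ht
    exact mul_nonneg (Real.rpow_nonneg (le_of_lt ht) p) (Real.exp_pos _).le
  · exact integrableOn_rpow_exp b hp

set_option maxHeartbeats 1000000 in
theorem statement11 (lam th mu sig : ℝ)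
    (hlam : 0 < lam) (hth : 0 < th) (hmu : 0 < mu) (hsig : 0 < sig)
    (Phi : ℝ → ℝ) (hPhiC2 : ContDiff ℝ 2 Phi)
    (hPhiconv : StrictConvexOn ℝ Set.univ Phi)
    (hPhi' : ∀ c ∈ Set.Icc (0:ℝ) 1, deriv Phi c < 0) (hPhi1 : Phi 1 = 0)
    (hk : ∀ c ∈ Set.Icc (0:ℝ) 1, 0 < kfun lam th Phi c)
    (beta : ℝ → ℝ)
    (hbeta : ∀ c ∈ Set.Icc (0:ℝ) 1, Hfun lam th mu sig Phi (beta c) c = 0 ∧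
      beta c < x0fun lam th mu Phi c ∧
      ∀ y : ℝ, Hfun lam th mu sig Phi y c = 0 → y = beta c)
    (hbetadec : StrictAntiOn beta (Set.Icc (0:ℝ) 1)) :
    ∀ c ∈ Set.Icc (0:ℝ) 1, ∀ x : ℝ, beta c < x →
      (Ffun lam th mu sig Phi beta x c
        = mu * Phi c + (x - mu) * (lam * Phi c) / (lam + th)
          + OUphi lam th mu sig x *
            ∫ y in c..(1:ℝ), Gfun lam th mu Phi (beta y) y / OUphi lam th mu sig (beta y)) ∧
      (1 / 2 * sig ^ 2 * deriv (deriv (fun x => Ffun lam th mu sig Phi beta x c)) x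
        + th * (mu - x) * deriv (fun x => Ffun lam th mu sig Phi beta x c) x
        - lam * Ffun lam th mu sig Phi beta x c
      = -(lam * Phi c * x)) := by
  intro c hc x hx
  obtain ⟨hc0, hc1⟩ := hc
  have hlt : (0:ℝ) < lam + th := by linarith
  have hlt' : lam + th ≠ 0 := ne_of_gt hlt
  have hth' : th ≠ 0 := ne_of_gt hth
  have hlam' : lam ≠ 0 := ne_of_gt hlam
  have hνpos : 0 < lam / th := div_pos hlam hth
  have ha : 0 < Real.sqrt (2 * th) / sig :=
    div_pos (Real.sqrt_pos.2 (by linarith)) hsig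
  set a : ℝ := Real.sqrt (2 * th) / sig with ha_def
  clear_value a
  -- φ basic facts
  have hOU : OUphi lam th mu sig = Ifun th sig mu (lam / th - 1) :=
    OUphi_eq_Ifun lam th mu sig
  have hφd : ∀ y : ℝ, HasDerivAt (OUphi lam th mu sig)
      (-a * Ifun th sig mu (lam / th) y) y := by
    intro y
    rw [hOU, ha_def]
    have h := hasDerivAt_Ifun mu hth hsig (p := lam / th - 1) (by linarith) y
    rwa [show lam / th - 1 + 1 = lam / th by ring] at h
  have hφcont : Continuous (OUphi lam th mu sig) :=
    continuous_iff_continuousAt.2 fun y => (hφd y).continuousAt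
  have hφpos : ∀ y, 0 < OUphi lam th mu sig y := by
    intro y
    rw [hOU]
    exact Ifun_pos th sig mu (by linarith) y
  -- Phi facts
  have hdP : Continuous (deriv Phi) := hPhiC2.continuous_deriv one_le_two
  have hPhidiff : ∀ y : ℝ, DifferentiableAt ℝ Phi y :=
    fun y => (hPhiC2.differentiable two_ne_zero).differentiableAt
  have hkcont : Continuous (kfun lam th Phi) := by
    unfold kfun
    exact continuous_const.add (continuous_const.mul hdP)
  have hGcont : Continuous (fun q : ℝ × ℝ => Gfun lam th mu Phi q.1 q.2) := by
    unfold Gfun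
    exact ((continuous_const.mul ((hkcont.comp continuous_snd).sub
      continuous_const)).div_const lam).add
      (((hkcont.comp continuous_snd).mul (continuous_fst.sub continuous_const)).div_const
        (lam + th))
  -- beta facts
  have hanti : AntitoneOn beta (Set.Icc 0 1) := hbetadec.antitoneOn
  have hmemIcc : ∀ y ∈ Set.Icc c 1, y ∈ Set.Icc (0:ℝ) 1 :=
    fun y hy => ⟨le_trans hc0 hy.1, hy.2⟩
  have hble : ∀ y ∈ Set.Icc c 1, beta y ≤ beta c :=
    fun y hy => hanti ⟨hc0, hc1⟩ (hmemIcc y hy) hy.1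
  have hbge : ∀ y ∈ Set.Icc c 1, beta 1 ≤ beta y :=
    fun y hy => hanti (hmemIcc y hy) ⟨zero_le_one, le_refl 1⟩ hy.2
  -- the function g
  set g : ℝ → ℝ :=
    fun y => Gfun lam th mu Phi (beta y) y / OUphi lam th mu sig (beta y) with hg_def
  clear_value g
  -- measurability via clamped beta
  set proj : ℝ → ℝ := fun y => max c (min y 1) with hproj_def
  clear_value proj
  have hprojmem : ∀ y, proj y ∈ Set.Icc c 1 := by
    intro y
    rw [hproj_def]
    exact ⟨le_max_left _ _, max_le hc1 (min_le_right _ _)⟩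
  have hprojmono : Monotone proj := by
    rw [hproj_def]
    exact fun y1 y2 h => max_le_max le_rfl (min_le_min h le_rfl)
  have hprojeq : ∀ y ∈ Set.Ioc c 1, proj y = y := by
    intro y hy
    rw [hproj_def]
    simp only
    rw [min_eq_left hy.2, max_eq_right hy.1.le]
  have hbtanti : Antitone (fun y => beta (proj y)) := fun y1 y2 h =>
    hanti (hmemIcc _ (hprojmem y1)) (hmemIcc _ (hprojmem y2)) (hprojmono h)
  have hbtmeas : Measurable (fun y => beta (proj y)) := hbtanti.measurable
  have hgt_meas1 : Measurable (fun y => Gfun lam th mu Phi (beta (proj y)) y) :=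
    Measurable.comp (g := fun q : ℝ × ℝ => Gfun lam th mu Phi q.1 q.2)
      (f := fun y => (beta (proj y), y)) hGcont.measurable (hbtmeas.prodMk measurable_id)
  have hgt_meas2 : Measurable (fun y => OUphi lam th mu sig (beta (proj y))) :=
    Measurable.comp (g := OUphi lam th mu sig) (f := fun y => beta (proj y))
      hφcont.measurable hbtmeas
  have hgt_meas : Measurable (fun y =>
      Gfun lam th mu Phi (beta (proj y)) y / OUphi lam th mu sig (beta (proj y))) :=
    hgt_meas1.div hgt_meas2
  -- bound for g
  obtain ⟨M, hM⟩ := ((isCompact_Icc.prod isCompact_Icc) :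
      IsCompact (Set.Icc (beta 1) (beta c) ×ˢ Set.Icc c 1)).exists_bound_of_continuousOn
      hGcont.continuousOn
  have hb1c : beta 1 ≤ beta c := hanti ⟨hc0, hc1⟩ ⟨zero_le_one, le_refl 1⟩ hc1
  obtain ⟨z, hzK, hzmin⟩ := isCompact_Icc.exists_isMinOn (Set.nonempty_Icc.2 hb1c)
    (hφcont.continuousOn (s := Set.Icc (beta 1) (beta c)))
  have hm : 0 < OUphi lam th mu sig z := hφpos z
  have hbound : ∀ y ∈ Set.Icc c 1, |g y| ≤ M / OUphi lam th mu sig z := by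
    intro y hy
    rw [hg_def]
    have hK : beta y ∈ Set.Icc (beta 1) (beta c) := ⟨hbge y hy, hble y hy⟩
    have h1 : |Gfun lam th mu Phi (beta y) y| ≤ M := hM (beta y, y) ⟨hK, hy⟩
    have hM0 : 0 ≤ M := le_trans (abs_nonneg _) h1
    have h2 : OUphi lam th mu sig z ≤ OUphi lam th mu sig (beta y) := hzmin hK
    simp only
    rw [abs_div, abs_of_pos (hφpos (beta y))]
    exact div_le_div₀ hM0 h1 hm h2
  -- integrability of g
  have hgInt : IntervalIntegrable g volume c 1 := by
    rw [intervalIntegrable_iff_integrableOn_Ioc_of_le hc1]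
    have haes : AEStronglyMeasurable g ((volume : Measure ℝ).restrict (Set.Ioc c 1)) := by
      apply hgt_meas.aestronglyMeasurable.congr
      filter_upwards [ae_restrict_mem measurableSet_Ioc] with y hy
      rw [hprojeq y hy, hg_def]
    have hconst : IntegrableOn (fun _ : ℝ => M / OUphi lam th mu sig z)
        (Set.Ioc c 1) volume := integrableOn_const measure_Ioc_lt_top.ne
    apply Integrable.mono' hconst haes
    filter_upwards [ae_restrict_mem measurableSet_Ioc] with y hy
    rw [Real.norm_eq_abs]
    exact hbound y (Set.Ioc_subset_Icc_self hy)
  -- Part 1 for all x' > beta c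
  have part1 : ∀ x' : ℝ, beta c < x' →
      Ffun lam th mu sig Phi beta x' c
        = mu * Phi c + (x' - mu) * (lam * Phi c) / (lam + th)
          + OUphi lam th mu sig x' * ∫ y in c..(1:ℝ), g y := by
    intro x' hx'
    have hbx : ∀ y ∈ Set.Icc c 1, beta y < x' :=
      fun y hy => lt_of_le_of_lt (hble y hy) hx'
    have hGx'cont : Continuous (fun y : ℝ => Gfun lam th mu Phi x' y) :=
      Continuous.comp (g := fun q : ℝ × ℝ => Gfun lam th mu Phi q.1 q.2)
        (f := fun y : ℝ => (x', y)) hGcont (continuous_const.prodMk continuous_id)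
    have hGxint : IntervalIntegrable (fun y => Gfun lam th mu Phi x' y) volume c 1 :=
      hGx'cont.intervalIntegrable c 1
    have hcongr : Set.EqOn (fun y => ufun lam th mu sig Phi (beta y) x' y)
        (fun y => Gfun lam th mu Phi x' y - g y * OUphi lam th mu sig x')
        (Set.uIcc c 1) := by
      intro y hy
      rw [Set.uIcc_of_le hc1] at hy
      simp only [ufun, hg_def]
      rw [if_pos (hbx y hy)]
    have hsplit : (∫ y in c..(1:ℝ), ufun lam th mu sig Phi (beta y) x' y)
        = (∫ y in c..(1:ℝ), Gfun lam th mu Phi x' y)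
          - (∫ y in c..(1:ℝ), g y) * OUphi lam th mu sig x' := by
      rw [intervalIntegral.integral_congr hcongr,
        intervalIntegral.integral_sub hGxint (hgInt.mul_const _),
        intervalIntegral.integral_mul_const]
    have hGrep : ∀ y : ℝ, Gfun lam th mu Phi x' y
        = x' + (mu + lam * (x' - mu) / (lam + th)) * deriv Phi y := by
      intro y
      unfold Gfun kfun
      field_simp
      ring
    have hGval : (∫ y in c..(1:ℝ), Gfun lam th mu Phi x' y)
        = x' * (1 - c) - (mu + lam * (x' - mu) / (lam + th)) * Phi c := by
      rw [intervalIntegral.integral_congr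
        (g := fun y => x' + (mu + lam * (x' - mu) / (lam + th)) * deriv Phi y)
        (fun y _ => hGrep y)]
      rw [intervalIntegral.integral_add intervalIntegrable_const
        ((hdP.intervalIntegrable c 1).const_mul _),
        intervalIntegral.integral_const, intervalIntegral.integral_const_mul,
        intervalIntegral.integral_deriv_eq_sub (fun y _ => hPhidiff y)
          (hdP.intervalIntegrable c 1), hPhi1]
      simp only [smul_eq_mul]
      ring
    unfold Ffun
    rw [hsplit, hGval]
    have hCx : (mu + lam * (x' - mu) / (lam + th)) * Phi c
        = mu * Phi c + (x' - mu) * (lam * Phi c) / (lam + th) := by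
      field_simp
    linear_combination hCx
  refine ⟨part1 x hx, ?_⟩
  -- Part 2
  set CC : ℝ := ∫ y in c..(1:ℝ), g y with hCC_def
  clear_value CC
  have hclosed : ∀ x' : ℝ, beta c < x' →
      Ffun lam th mu sig Phi beta x' c
        = mu * Phi c + (x' - mu) * (lam * Phi c / (lam + th))
          + OUphi lam th mu sig x' * CC := by
    intro x' hx'
    rw [part1 x' hx']
    ring
  have hd1 : ∀ x' : ℝ, HasDerivAt
      (fun w => mu * Phi c + (w - mu) * (lam * Phi c / (lam + th))
        + OUphi lam th mu sig w * CC)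
      (lam * Phi c / (lam + th) + (-a * Ifun th sig mu (lam / th) x') * CC) x' := by
    intro x'
    have h1 := (((hasDerivAt_id x').sub_const mu).mul_const
      (lam * Phi c / (lam + th))).const_add (mu * Phi c)
    have h2 := (hφd x').mul_const CC
    have h3 := h1.add h2
    exact h3.congr_deriv (by ring)
  have hder1 : ∀ x' ∈ Set.Ioi (beta c),
      deriv (fun w => Ffun lam th mu sig Phi beta w c) x'
        = lam * Phi c / (lam + th) + (-a * Ifun th sig mu (lam / th) x') * CC := by
    intro x' hx'
    have hev : (fun w => Ffun lam th mu sig Phi beta w c)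
        =ᶠ[nhds x'] (fun w => mu * Phi c + (w - mu) * (lam * Phi c / (lam + th))
          + OUphi lam th mu sig w * CC) := by
      filter_upwards [Ioi_mem_nhds hx'] with w hw
      exact hclosed w hw
    rw [hev.deriv_eq]
    exact (hd1 x').deriv
  have hd2 : HasDerivAt
      (fun w => lam * Phi c / (lam + th) + (-a * Ifun th sig mu (lam / th) w) * CC)
      ((-a * (-a * Ifun th sig mu (lam / th + 1) x)) * CC) x := by
    have h0 := hasDerivAt_Ifun mu hth hsig (p := lam / th) (by linarith) x
    rw [← ha_def] at h0
    have h := h0.const_mul (-a)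
    exact (h.mul_const CC).const_add _
  have hder2 : deriv (deriv (fun w => Ffun lam th mu sig Phi beta w c)) x
      = (-a * (-a * Ifun th sig mu (lam / th + 1) x)) * CC := by
    have hev : deriv (fun w => Ffun lam th mu sig Phi beta w c)
        =ᶠ[nhds x] (fun w => lam * Phi c / (lam + th)
          + (-a * Ifun th sig mu (lam / th) w) * CC) := by
      filter_upwards [Ioi_mem_nhds hx] with w hw
      exact hder1 w hw
    rw [hev.deriv_eq]
    exact hd2.deriv
  have hparts : lam / th * Ifun th sig mu (lam / th - 1) x
      - Ifun th sig mu (lam / th + 1) x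
      - (a * (x - mu)) * Ifun th sig mu (lam / th) x = 0 := by
    rw [ha_def]
    exact parts_lemma (Real.sqrt (2 * th) / sig * (x - mu)) hνpos
  have hs2 : sig ^ 2 * a ^ 2 = 2 * th := by
    rw [ha_def, div_pow, Real.sq_sqrt (by linarith : (0:ℝ) ≤ 2 * th)]
    field_simp
  rw [hder2, hder1 x hx, hclosed x hx, hOU]
  set I0 : ℝ := Ifun th sig mu (lam / th - 1) x with hI0
  set I1 : ℝ := Ifun th sig mu (lam / th) x with hI1
  set I2 : ℝ := Ifun th sig mu (lam / th + 1) x with hI2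
  clear_value I0 I1 I2
  have h3 : lam * I0 - th * I2 - th * (a * (x - mu)) * I1 = 0 := by
    field_simp at hparts
    linear_combination hparts
  have hk' : lam * Phi c / (lam + th) * (lam + th) = lam * Phi c := div_mul_cancel₀ _ hlt'
  linear_combination (mu - x) * hk' + (CC * I2 / 2) * hs2 - CC * h3
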